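/- The functions f₁(q,p) = j₁, f₂(q,p) = p, f₃(q,p) = k j₁ q, f₄(q,p) = j₂ − (k/2) p q on ℝ² define a canonical realization of the coadjoint orbit through λ(j) = (j₁, 0, 0, j₂): (a) (f₁, f₂, f₃, f₄)(0,0) = (j₁, 0, 0, j₂); (b) for all i, j ∈ {1,2,3,4} and all (q,p) ∈ ℝ², (∂f_i/∂p)(∂f_j/∂q) − (∂f_i/∂q)(∂f_j/∂p) = Σ_k C^k_{ij} f_k(q,p); (c) the invariants are constant on the image: 2 f₁ f₄ + f₂ f₃ = 2 j₁ j₂ identically on ℝ². -/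
import Mathlib


/-- The structure constants `C^l_{ij}` of the Lie algebra `𝔤` (indices `0,…,3` for `1,…,4`):
the nonzero brackets are `[e₂,e₃] = k e₁`, `[e₂,e₄] = −(k/2) e₂`, `[e₃,e₄] = (k/2) e₃`. -/
noncomputable def structC (k : ℝ) (i j l : Fin 4) : ℝ :=
  if i = 1 ∧ j = 2 ∧ l = 0 then k
  else if i = 2 ∧ j = 1 ∧ l = 0 then -k
  else if i = 1 ∧ j = 3 ∧ l = 1 then -(k / 2)
  else if i = 3 ∧ j = 1 ∧ l = 1 then k / 2
  else if i = 2 ∧ j = 3 ∧ l = 2 then k / 2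
  else if i = 3 ∧ j = 2 ∧ l = 2 then -(k / 2)
  else 0

/-- The transition functions `f₁ = j₁`, `f₂ = p`, `f₃ = k j₁ q`, `f₄ = j₂ − (k/2) p q`
to canonical coordinates `(q,p)` on the coadjoint orbit through `λ(j) = (j₁,0,0,j₂)`. -/
noncomputable def canonF (k j₁ j₂ : ℝ) (i : Fin 4) (q p : ℝ) : ℝ :=
  ![j₁, p, k * j₁ * q, j₂ - k / 2 * p * q] i


lemma derivP (k j₁ j₂ : ℝ) (i : Fin 4) (q p : ℝ) :
    deriv (fun p' => canonF k j₁ j₂ i q p') p =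
      ![0, 1, 0, -(k / 2 * q)] i := by
  fin_cases i
  · simp [canonF]
  · simp [canonF]
  · simp [canonF]
  · show deriv (fun p' : ℝ => j₂ - k / 2 * p' * q) p = -(k / 2 * q)
    rw [show (fun p' : ℝ => j₂ - k / 2 * p' * q)
        = fun p' : ℝ => j₂ - (k / 2 * q) * p' from funext fun _ => by ring]
    have h : HasDerivAt (fun p' : ℝ => j₂ - (k / 2 * q) * p') (-(k / 2 * q)) p := by
      simpa using ((hasDerivAt_id p).const_mul (k / 2 * q)).const_sub j₂
    simp [h.deriv]

lemma derivQ (k j₁ j₂ : ℝ) (i : Fin 4) (q p : ℝ) :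
    deriv (fun q' => canonF k j₁ j₂ i q' p) q =
      ![0, 0, k * j₁, -(k / 2 * p)] i := by
  fin_cases i
  · simp [canonF]
  · simp [canonF]
  · show deriv (fun q' : ℝ => k * j₁ * q') q = k * j₁
    have h : HasDerivAt (fun q' : ℝ => (k * j₁) * q') (k * j₁) q := by
      simpa using (hasDerivAt_id q).const_mul (k * j₁)
    simp [h.deriv]
  · show deriv (fun q' : ℝ => j₂ - k / 2 * p * q') q = -(k / 2 * p)
    rw [show (fun q' : ℝ => j₂ - k / 2 * p * q')
        = fun q' : ℝ => j₂ - (k / 2 * p) * q' from funext fun _ => by ring]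
    have h : HasDerivAt (fun q' : ℝ => j₂ - (k / 2 * p) * q') (-(k / 2 * p)) q := by
      simpa using ((hasDerivAt_id q).const_mul (k / 2 * p)).const_sub j₂
    simp [h.deriv]

/-- The functions `f_i(q,p)` define a canonical realization of the
coadjoint orbit through `λ(j) = (j₁,0,0,j₂)`: (a) `f(0,0) = λ(j)`; (b) they satisfy the
canonical-bracket relations `{f_i, f_j} = Σ_k C^k_{ij} f_k`; (c) the Casimir invariant
`2 f₁ f₄ + f₂ f₃` is constantly `2 j₁ j₂`. -/
theorem canonical_realization (k j₁ j₂ : ℝ) (hk : 0 < k) :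
    (∀ i : Fin 4, canonF k j₁ j₂ i 0 0 = ![j₁, 0, 0, j₂] i) ∧
    (∀ i j : Fin 4, ∀ q p : ℝ,
      deriv (fun p' => canonF k j₁ j₂ i q p') p * deriv (fun q' => canonF k j₁ j₂ j q' p) q
        - deriv (fun q' => canonF k j₁ j₂ i q' p) q * deriv (fun p' => canonF k j₁ j₂ j q p') p
        = ∑ l : Fin 4, structC k i j l * canonF k j₁ j₂ l q p) ∧
    (∀ q p : ℝ,
      2 * canonF k j₁ j₂ 0 q p * canonF k j₁ j₂ 3 q p
        + canonF k j₁ j₂ 1 q p * canonF k j₁ j₂ 2 q p = 2 * j₁ * j₂) := by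
  refine ⟨fun i => by fin_cases i <;> simp [canonF], fun i j q p => ?_, fun q p => by
    simp [canonF]; ring⟩
  rw [derivP, derivQ, derivP, derivQ]
  fin_cases i <;> fin_cases j <;>
    simp [canonF, structC, Fin.sum_univ_four] <;> ring
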